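/- arXiv:1001.1033 — 6 statements merged into one kernel-verified Lean document; each statement's English description precedes it below -/
import Mathlib

section
/- For every 1 ≤ i ≤ r there exists a unique vertex t ∉ D with t > x_i such that ℓ(x_i, t) = 0 and ℓ(x_i, s) > 0 for every vertex s ∉ D with x_i < s < t. In particular, the right move R_i is well defined and moves the i-th × to this uniquely determined vertex t. -/
/-- Number of elements of `D` strictly between `s` and `t`. -/
noncomputable def crossCount (D : Finset ℤ) (s t : ℤ) : ℕ :=
  ((Finset.Ioo s t).filter (fun z => z ∈ D)).card

/-- `ℓ(s,t)`: the number of elements of `D` strictly between `s` and `t` minus the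
number of integers strictly between `s` and `t` that are not in `D`. -/
noncomputable def ell (D : Finset ℤ) (s t : ℤ) : ℤ :=
  (crossCount D s t : ℤ) - (((Finset.Ioo s t).filter (fun z => z ∉ D)).card : ℤ)

/-- `t` is the target vertex of the right move `R_i` on the diagram `D` with ×'s at
`x 0 < x 1 < ⋯`: `t ∉ D`, `t > x_i`, `ℓ(x_i,t) = 0`, and `ℓ(x_i,s) > 0` for every
empty vertex `s` with `x_i < s < t`. -/
def IsRightMoveTarget (r : ℕ) (D : Finset ℤ) (x : Fin r → ℤ) (i : Fin r) (t : ℤ) : Prop :=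
  t ∉ D ∧ x i < t ∧ ell D (x i) t = 0 ∧
    ∀ s : ℤ, s ∉ D → x i < s → s < t → 0 < ell D (x i) s

lemma ell_base (D : Finset ℤ) (a : ℤ) : ell D a (a + 1) = 0 := by
  have h : Finset.Ioo a (a + 1) = ∅ := by ext z; simp
  simp [ell, crossCount, h]

lemma ell_succ (D : Finset ℤ) (a t : ℤ) (h : a < t) :
    ell D a (t + 1) = ell D a t + (if t ∈ D then 1 else -1) := by
  have hins : Finset.Ioo a (t + 1) = insert t (Finset.Ioo a t) := by
    ext z; simp; omega
  have htm : t ∉ Finset.Ioo a t := by simp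
  by_cases hD : t ∈ D
  · have hnm : t ∉ (Finset.Ioo a t).filter (fun z => z ∈ D) := by
      simp [htm]
    simp only [ell, crossCount, hins, Finset.filter_insert, hD, if_pos, if_neg,
      not_not, Finset.card_insert_of_notMem hnm]
    push_cast; ring
  · have hnm : t ∉ (Finset.Ioo a t).filter (fun z => z ∉ D) := by
      simp [htm]
    simp only [ell, crossCount, hins, Finset.filter_insert, hD, if_neg, if_pos,
      not_false_iff, Finset.card_insert_of_notMem hnm]
    push_cast; ring

lemma ell_le (D : Finset ℤ) (a t : ℤ) (h : a < t) :
    ell D a t ≤ 2 * D.card - (t - a - 1) := by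
  have hc : crossCount D a t ≤ D.card :=
    Finset.card_le_card (fun z hz => (Finset.mem_filter.mp hz).2)
  have hsum := Finset.card_filter_add_card_filter_not
    (s := Finset.Ioo a t) (p := fun z => z ∈ D)
  have hcard : (Finset.Ioo a t).card = (t - a - 1).toNat := Int.card_Ioo a t
  unfold ell crossCount at *
  omega

/-- For every `1 ≤ i ≤ r` there is a unique vertex `t ∉ D` with `t > x_i`, `ℓ(x_i,t) = 0`
and `ℓ(x_i,s) > 0` for all empty vertices `s` with `x_i < s < t`; i.e. the right move
`R_i` is well defined. -/
theorem rightMove_target_existsUnique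
    (r : ℕ) (hr : 1 ≤ r) (D : Finset ℤ) (hD : D.card = r)
    (x : Fin r → ℤ) (hx : StrictMono x) (hxD : ∀ z : ℤ, z ∈ D ↔ ∃ i, x i = z)
    (i : Fin r) :
    ∃! t : ℤ, IsRightMoveTarget r D x i t := by
  classical
  set a := x i with ha
  have hP : ∃ n : ℕ, ell D a (a + 1 + n) < 0 := by
    refine ⟨2 * D.card + 1, ?_⟩
    have h := ell_le D a (a + 1 + (2 * D.card + 1 : ℕ)) (by push_cast; omega)
    push_cast at h ⊢
    omega
  set n := Nat.find hP with hndef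
  have hn : ell D a (a + 1 + n) < 0 := Nat.find_spec hP
  have hmin : ∀ m : ℕ, m < n → 0 ≤ ell D a (a + 1 + m) := fun m hm =>
    le_of_not_gt (Nat.find_min hP hm)
  have hn0 : n ≠ 0 := by
    intro h0
    rw [h0] at hn
    push_cast at hn
    rw [add_zero] at hn
    have := ell_base D a
    omega
  obtain ⟨k, hk⟩ := Nat.exists_eq_succ_of_ne_zero hn0
  set t := a + 1 + (k : ℤ) with htdef
  have hak : a < t := by simp only [htdef]; omega
  have hrec := ell_succ D a t hak
  have h1 : ell D a (t + 1) < 0 := by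
    have : a + 1 + (n : ℤ) = t + 1 := by rw [hk]; push_cast [htdef]; ring
    rwa [this] at hn
  have h2 : 0 ≤ ell D a t := hmin k (by omega)
  have htD : t ∉ D := by
    intro h
    rw [if_pos h] at hrec
    omega
  have h0 : ell D a t = 0 := by
    rw [if_neg htD] at hrec
    omega
  have hforall : ∀ s : ℤ, s ∉ D → a < s → s < t → 0 < ell D a s := by
    intro s hsD has hst
    set m := (s - a - 1).toNat with hmdef
    have hms : (m : ℤ) = s - a - 1 := Int.toNat_of_nonneg (by omega)
    have hseq : a + 1 + (m : ℤ) = s := by omega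
    have hmk : m < k := by
      have : (m : ℤ) < (k : ℤ) := by simp only [htdef] at hst; omega
      exact_mod_cast this
    have e1 : 0 ≤ ell D a s := by
      have := hmin m (by omega)
      rwa [hseq] at this
    have e2 : 0 ≤ ell D a (s + 1) := by
      have := hmin (m + 1) (by omega)
      have heq : a + 1 + ((m : ℤ) + 1) = s + 1 := by omega
      push_cast at this
      rwa [heq] at this
    have hrec2 := ell_succ D a s has
    rw [if_neg hsD] at hrec2
    omega
  refine ⟨t, ⟨htD, hak, h0, hforall⟩, ?_⟩
  rintro t' ⟨h1', h2', h3', h4'⟩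
  rw [← ha] at h3' h4'
  rcases lt_trichotomy t' t with h | h | h
  · have := hforall t' h1' h2' h
    omega
  · exact h
  · have := h4' t htD hak h
    omega
end

section
/- Every path on D can be written in exactly one way as a disjoint sum P_1 P_2 ⋯ P_s of indecomposable paths on D (the blocks of the path): there is a unique partition of the sequence of left moves into consecutive segments such that each segment is an indecomposable path and consecutive segments are disjoint. -/
/-- `s` is a target vertex for the left move `L_{i,j}` on the diagram `D`. -/
def IsLeftMoveTarget (r : ℕ) (D : Finset ℤ) (x : Fin r → ℤ) (i j : Fin r) (s : ℤ) : Prop :=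
  i ≤ j ∧ s ∉ D ∧ s < x j ∧ ell D s (x j) = 0 ∧
    crossCount D s (x j) = (j : ℕ) - (i : ℕ)

/-- A path on `D`. -/
def IsPath (r : ℕ) (D : Finset ℤ) (x : Fin r → ℤ) {k : ℕ}
    (iseq jseq : Fin k → Fin r) (sseq : Fin k → ℤ) : Prop :=
  StrictMono jseq ∧
  (∀ a b : Fin k, a < b → iseq b ≤ jseq a → iseq b ≤ iseq a) ∧
  (∀ b : Fin k, ∀ p : Fin r, iseq b ≤ p → p < jseq b →
      0 ≤ ell D (x p) (x (jseq b)) → ∃ a : Fin k, a < b ∧ jseq a = p) ∧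
  (∀ a : Fin k, IsLeftMoveTarget r D x (iseq a) (jseq a) (sseq a)) ∧
  Function.Injective sseq

/-- The consecutive segment `[c₁, c₂)` of a `Fin k`-indexed sequence. -/
def seg {α : Type*} {k : ℕ} (f : Fin k → α) (c₁ c₂ : ℕ) (h : c₂ ≤ k) :
    Fin (c₂ - c₁) → α :=
  fun b => f ⟨c₁ + b.1, by have hb := b.2; omega⟩

/-- `c₁` and `c₂` are consecutive elements of the finite set `C`. -/
def ConsecutiveIn (C : Finset ℕ) (c₁ c₂ : ℕ) : Prop :=
  c₁ ∈ C ∧ c₂ ∈ C ∧ c₁ < c₂ ∧ ∀ c ∈ C, ¬(c₁ < c ∧ c < c₂)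

/-- `C` is the set of cut points of a partition of the sequence of left moves
`(L_{i_a,j_a})_{a < k}` into consecutive segments, each of which is an indecomposable
path on `D`, consecutive segments being disjoint. -/
def IsBlockDecomp (r : ℕ) (D : Finset ℤ) (x : Fin r → ℤ) {k : ℕ}
    (iseq jseq : Fin k → Fin r) (sseq : Fin k → ℤ) (C : Finset ℕ) : Prop :=
  (∀ c ∈ C, c ≤ k) ∧ 0 ∈ C ∧ k ∈ C ∧
  -- each segment between consecutive cut points is an indecomposable path
  (∀ c₁ c₂ : ℕ, ConsecutiveIn C c₁ c₂ → ∀ (h : c₂ ≤ k),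
      IsPath r D x (seg iseq c₁ c₂ h) (seg jseq c₁ c₂ h) (seg sseq c₁ c₂ h) ∧
      ∀ (h1 : c₁ < c₂), iseq ⟨c₂ - 1, by omega⟩ ≤ iseq ⟨c₁, by omega⟩) ∧
  -- consecutive segments are disjoint: the last `j` of a segment is smaller than
  -- every `i` of the next segment
  (∀ c₁ c₂ c₃ : ℕ, ConsecutiveIn C c₁ c₂ → ConsecutiveIn C c₂ c₃ →
      ∀ (h2 : c₂ ≤ k) (h1 : c₁ < c₂) (q : ℕ) (hq : q < k), c₂ ≤ q → q < c₃ →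
        jseq ⟨c₂ - 1, by omega⟩ < iseq ⟨q, hq⟩)

/-- Auxiliary: the "cut" property at position `c`: every move before `c` is disjoint
from every move at or after `c`. -/
def CutProp' {r k : ℕ} (iseq jseq : Fin k → Fin r) (c : ℕ) : Prop :=
  ∀ a b : Fin k, (a : ℕ) < c → c ≤ (b : ℕ) → jseq a < iseq b

/-- Every path on `D` can be written in exactly one way as a disjoint sum of
indecomposable paths (its blocks): there is a unique partition of its sequence of left
moves into consecutive segments such that each segment is an indecomposable path and
consecutive segments are disjoint. -/
theorem blockDecomposition_existsUnique
    (r : ℕ) (hr : 1 ≤ r) (D : Finset ℤ) (hD : D.card = r)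
    (x : Fin r → ℤ) (hx : StrictMono x) (hxD : ∀ z : ℤ, z ∈ D ↔ ∃ i, x i = z)
    (k : ℕ) (iseq jseq : Fin k → Fin r) (sseq : Fin k → ℤ)
    (hP : IsPath r D x iseq jseq sseq) :
    ∃! C : Finset ℕ, IsBlockDecomp r D x iseq jseq sseq C := by
  classical
  obtain ⟨hjmono, hcond2, hcond3, htarget, hinj⟩ := hP
  have hij : ∀ a : Fin k, iseq a ≤ jseq a := fun a => (htarget a).1
  -- the "cut" property: everything before `c` is disjoint from everything after `c`
  let CutProp : ℕ → Prop := CutProp' iseq jseq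
  let Cut : Finset ℕ := (Finset.range (k+1)).filter CutProp
  have hmemCut : ∀ c, c ∈ Cut ↔ c ≤ k ∧ CutProp c := by
    intro c
    simp [Cut, Finset.mem_filter, Finset.mem_range, Nat.lt_succ_iff]
  have h0cut : CutProp 0 := fun a b ha hb => absurd ha (by omega)
  have hkcut : CutProp k := fun a b ha hb => absurd b.isLt (by omega)
  -- extraction from the failure of the cut property at an interior point
  have hnocut : ∀ c₁ c₂ c : ℕ, CutProp c₁ → CutProp c₂ → c₁ < c → c < c₂ → ¬ CutProp c →
      ∃ a b : Fin k, c₁ ≤ (a:ℕ) ∧ (a:ℕ) < c ∧ c ≤ (b:ℕ) ∧ (b:ℕ) < c₂ ∧ iseq b ≤ jseq a := by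
    intro c₁ c₂ c hc₁ hc₂ h1 h2 hnc
    simp only [CutProp, CutProp', not_forall, not_lt] at hnc
    obtain ⟨a, b, ha, hb, hab⟩ := hnc
    refine ⟨a, b, ?_, ha, hb, ?_, hab⟩
    · by_contra h
      exact absurd hab (not_le.2 (hc₁ a b (by omega) (by omega)))
    · by_contra h
      exact absurd hab (not_le.2 (hc₂ a b (by omega) (by omega)))
  -- the chain argument for indecomposability
  have chain : ∀ c₁ c₂ : ℕ, CutProp c₁ → CutProp c₂ → c₁ < c₂ → c₂ ≤ k →
      (∀ c, c₁ < c → c < c₂ → ¬ CutProp c) →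
      ∀ (hm : c₂ - 1 < k) (hc₁k : c₁ < k),
      ∀ n (a : Fin k), (a:ℕ) - c₁ ≤ n → c₁ ≤ (a:ℕ) → (a:ℕ) < c₂ →
        iseq ⟨c₂-1, hm⟩ ≤ iseq a → iseq ⟨c₂-1, hm⟩ ≤ jseq a →
        iseq ⟨c₂-1, hm⟩ ≤ iseq ⟨c₁, hc₁k⟩ := by
    intro c₁ c₂ hc₁ hc₂ hlt hle hno hm hc₁k n
    induction n with
    | zero =>
      intro a h0a hca hac hia hja
      have ha : a = ⟨c₁, hc₁k⟩ := Fin.ext (show (a:ℕ) = c₁ by omega)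
      rwa [ha] at hia
    | succ n ih =>
      intro a h0a hca hac hia hja
      by_cases heq : (a:ℕ) = c₁
      · have ha : a = ⟨c₁, hc₁k⟩ := Fin.ext heq
        rwa [ha] at hia
      · obtain ⟨a₂, b₂, h1, h2, h3, h4, h5⟩ :=
          hnocut c₁ c₂ (a:ℕ) hc₁ hc₂ (by omega) hac (hno _ (by omega) hac)
        have ha₂b₂ : a₂ < b₂ := by rw [Fin.lt_def]; omega
        have h6 : iseq b₂ ≤ iseq a₂ := hcond2 a₂ b₂ ha₂b₂ h5
        have hm_b : iseq ⟨c₂-1, hm⟩ ≤ jseq b₂ :=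
          le_trans hja (hjmono.monotone (show a ≤ b₂ by rw [Fin.le_def]; omega))
        have key : iseq ⟨c₂-1, hm⟩ ≤ iseq a₂ := by
          by_cases hb : (b₂:ℕ) = c₂ - 1
          · have hbe : b₂ = ⟨c₂-1, hm⟩ := Fin.ext hb
            rw [← hbe]; exact h6
          · have hblt : b₂ < (⟨c₂-1, hm⟩ : Fin k) := by rw [Fin.lt_def]; simp; omega
            exact le_trans (hcond2 b₂ ⟨c₂-1, hm⟩ hblt hm_b) h6
        exact ih a₂ (by omega) h1 (by omega) key (le_trans key (hij a₂))
  have hindec : ∀ c₁ c₂, CutProp c₁ → CutProp c₂ → c₁ < c₂ → c₂ ≤ k →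
      (∀ c, c₁ < c → c < c₂ → ¬ CutProp c) →
      ∀ (hm : c₂ - 1 < k) (hc₁k : c₁ < k), iseq ⟨c₂-1, hm⟩ ≤ iseq ⟨c₁, hc₁k⟩ := by
    intro c₁ c₂ hc₁ hc₂ hlt hle hno hm hc₁k
    by_cases h : c₂ - 1 = c₁
    · exact le_of_eq (congrArg iseq (Fin.ext h))
    · obtain ⟨a, b, h1, h2, h3, h4, h5⟩ :=
        hnocut c₁ c₂ (c₂-1) hc₁ hc₂ (by omega) (by omega) (hno _ (by omega) (by omega))
      have hb : b = ⟨c₂-1, hm⟩ := Fin.ext (show (b:ℕ) = c₂ - 1 by omega)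
      have hab : a < b := by rw [Fin.lt_def]; omega
      have h6 : iseq b ≤ iseq a := hcond2 a b hab h5
      rw [hb] at h5 h6
      exact chain c₁ c₂ hc₁ hc₂ hlt hle hno hm hc₁k ((a:ℕ) - c₁) a le_rfl h1 (by omega)
        h6 (le_trans h6 (hij a))
  -- `Cut` is a block decomposition
  have hBD : IsBlockDecomp r D x iseq jseq sseq Cut := by
    refine ⟨fun c hc => ((hmemCut c).1 hc).1, (hmemCut 0).2 ⟨Nat.zero_le k, h0cut⟩,
        (hmemCut k).2 ⟨le_rfl, hkcut⟩, ?_, ?_⟩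
    · intro c₁ c₂ hcons h
      obtain ⟨hm1, hm2, hlt, hbetween⟩ := hcons
      have hcp1 : CutProp c₁ := ((hmemCut c₁).1 hm1).2
      have hcp2 : CutProp c₂ := ((hmemCut c₂).1 hm2).2
      have hno : ∀ c, c₁ < c → c < c₂ → ¬ CutProp c := by
        intro c hc1 hc2 hcp
        exact hbetween c ((hmemCut c).2 ⟨by omega, hcp⟩) ⟨hc1, hc2⟩
      constructor
      · refine ⟨?_, ?_, ?_, ?_, ?_⟩
        · intro a b hab
          exact hjmono (show (⟨c₁ + a.1, by omega⟩ : Fin k) < ⟨c₁ + b.1, by omega⟩ by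
            rw [Fin.lt_def]; simp; exact hab)
        · intro a b hab hle'
          exact hcond2 ⟨c₁ + a.1, by omega⟩ ⟨c₁ + b.1, by omega⟩
            (by rw [Fin.lt_def]; simp; exact hab) hle'
        · intro b p hpi hpj hell
          obtain ⟨a, hab, hja⟩ := hcond3 ⟨c₁ + b.1, by omega⟩ p hpi hpj hell
          have hac₁ : c₁ ≤ (a:ℕ) := by
            by_contra hcon
            have := hcp1 a ⟨c₁ + b.1, by omega⟩ (by omega) (show c₁ ≤ c₁ + b.1 by omega)
            rw [hja] at this
            exact absurd hpi (not_le.2 this)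
          have habv : (a:ℕ) < c₁ + b.1 := hab
          refine ⟨⟨a.1 - c₁, by omega⟩, by rw [Fin.lt_def]; simp; omega, ?_⟩
          show jseq ⟨c₁ + (a.1 - c₁), by omega⟩ = p
          have : (⟨c₁ + (a.1 - c₁), by omega⟩ : Fin k) = a := Fin.ext (show c₁ + (a.1 - c₁) = (a:ℕ) by omega)
          rw [this, hja]
        · intro a
          exact htarget ⟨c₁ + a.1, by omega⟩
        · intro a b hab
          have := hinj hab
          have hv : c₁ + a.1 = c₁ + b.1 := congrArg Fin.val this
          exact Fin.ext (by omega)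
      · intro h1
        exact hindec c₁ c₂ hcp1 hcp2 h1 h hno (by omega) (by omega)
    · intro c₁ c₂ c₃ hcons hcons' h2 h1 q hq hq1 hq2
      have hcp2 : CutProp c₂ := ((hmemCut c₂).1 hcons'.1).2
      exact hcp2 ⟨c₂ - 1, by omega⟩ ⟨q, hq⟩ (show c₂ - 1 < c₂ by omega) (show c₂ ≤ q from hq1)
  -- uniqueness
  have huniq : ∀ C, IsBlockDecomp r D x iseq jseq sseq C → C = Cut := by
    intro C hC
    obtain ⟨hCk, hC0, hCkmem, hCblocks, hCdisj⟩ := hC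
    have key : ∀ n c, c ∈ C → k - c ≤ n → CutProp c := by
      intro n
      induction n with
      | zero =>
        intro c hc hkc a b ha hb
        exact absurd b.isLt (by have := hCk c hc; omega)
      | succ n ih =>
        intro c hc hkc a b ha hb
        by_cases hck : c = k
        · exact absurd b.isLt (by omega)
        have hck' : c < k := lt_of_le_of_ne (hCk c hc) hck
        have hSne : (C.filter (fun e => c < e)).Nonempty :=
          ⟨k, Finset.mem_filter.2 ⟨hCkmem, hck'⟩⟩
        set c' := (C.filter (fun e => c < e)).min' hSne with hc'def
        have hc'S : c' ∈ C.filter (fun e => c < e) := Finset.min'_mem _ hSne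
        have hc'C : c' ∈ C := (Finset.mem_filter.1 hc'S).1
        have hcc' : c < c' := (Finset.mem_filter.1 hc'S).2
        have hconsec : ConsecutiveIn C c c' := by
          refine ⟨hc, hc'C, hcc', ?_⟩
          rintro d hd ⟨hd1, hd2⟩
          have : c' ≤ d := Finset.min'_le (C.filter (fun e => c < e)) d (Finset.mem_filter.2 ⟨hd, hd1⟩)
          omega
        by_cases hbc' : (b:ℕ) < c'
        · have hcpos : 0 < c := by omega
          have hTne : (C.filter (fun e => e < c)).Nonempty :=
            ⟨0, Finset.mem_filter.2 ⟨hC0, hcpos⟩⟩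
          set c₀ := (C.filter (fun e => e < c)).max' hTne with hc₀def
          have hc₀T : c₀ ∈ C.filter (fun e => e < c) := Finset.max'_mem _ hTne
          have hc₀C : c₀ ∈ C := (Finset.mem_filter.1 hc₀T).1
          have hc₀c : c₀ < c := (Finset.mem_filter.1 hc₀T).2
          have hconsec0 : ConsecutiveIn C c₀ c := by
            refine ⟨hc₀C, hc, hc₀c, ?_⟩
            rintro d hd ⟨hd1, hd2⟩
            have : d ≤ c₀ := Finset.le_max' (C.filter (fun e => e < c)) d (Finset.mem_filter.2 ⟨hd, hd2⟩)
            omega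
          have hdisj := hCdisj c₀ c c' hconsec0 hconsec (hCk c hc) hc₀c (b:ℕ) b.isLt hb hbc'
          have hle' : jseq a ≤ jseq ⟨c - 1, by omega⟩ :=
            hjmono.monotone (by rw [Fin.le_def]; simp; omega)
          calc jseq a ≤ jseq ⟨c - 1, by omega⟩ := hle'
            _ < iseq ⟨(b:ℕ), b.isLt⟩ := hdisj
            _ = iseq b := by rw [Fin.eta]
        · exact ih c' hc'C (by omega) a b (by omega) (by omega)
    ext c
    rw [hmemCut]
    constructor
    · intro hc
      exact ⟨hCk c hc, key (k - c) c hc le_rfl⟩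
    · rintro ⟨hck, hcp⟩
      by_contra hnc
      have hc0 : c ≠ 0 := fun h => hnc (h ▸ hC0)
      have hckne : c ≠ k := fun h => hnc (h ▸ hCkmem)
      have hTne : (C.filter (fun e => e < c)).Nonempty :=
        ⟨0, Finset.mem_filter.2 ⟨hC0, by omega⟩⟩
      have hSne : (C.filter (fun e => c < e)).Nonempty :=
        ⟨k, Finset.mem_filter.2 ⟨hCkmem, by omega⟩⟩
      set c₁ := (C.filter (fun e => e < c)).max' hTne with hc₁def
      set c₂ := (C.filter (fun e => c < e)).min' hSne with hc₂def
      have hc₁T : c₁ ∈ C.filter (fun e => e < c) := Finset.max'_mem _ hTne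
      have hc₂S : c₂ ∈ C.filter (fun e => c < e) := Finset.min'_mem _ hSne
      have hc₁C : c₁ ∈ C := (Finset.mem_filter.1 hc₁T).1
      have hc₂C : c₂ ∈ C := (Finset.mem_filter.1 hc₂S).1
      have hc₁c : c₁ < c := (Finset.mem_filter.1 hc₁T).2
      have hcc₂ : c < c₂ := (Finset.mem_filter.1 hc₂S).2
      have hc₂k : c₂ ≤ k := hCk c₂ hc₂C
      have hconsec : ConsecutiveIn C c₁ c₂ := by
        refine ⟨hc₁C, hc₂C, by omega, ?_⟩
        rintro d hd ⟨hd1, hd2⟩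
        rcases lt_trichotomy d c with h | h | h
        · have : d ≤ c₁ := Finset.le_max' (C.filter (fun e => e < c)) d (Finset.mem_filter.2 ⟨hd, h⟩)
          omega
        · exact hnc (h ▸ hd)
        · have : c₂ ≤ d := Finset.min'_le (C.filter (fun e => c < e)) d (Finset.mem_filter.2 ⟨hd, h⟩)
          omega
      have hblock := (hCblocks c₁ c₂ hconsec hc₂k).2 (by omega)
      have hcut := hcp ⟨c₁, by omega⟩ ⟨c₂ - 1, by omega⟩
        (show c₁ < c from hc₁c) (show c ≤ c₂ - 1 by omega)
      exact absurd (lt_of_lt_of_le hcut (le_trans hblock (hij _))) (lt_irrefl _)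
  exact ⟨Cut, hBD, fun C hC => huniq C hC⟩
end

section
/- A nonempty indecomposable path (L_{i_1,j_1}, …, L_{i_k,j_k}) on D has no bridges if and only if the set {j_1, …, j_k} of moved labels equals the whole integer interval [i_0, j_k], where i_0 = min{i_1,…,i_k}; equivalently, if and only if its length k equals its depth j_k − i_0 plus one. -/
/-- The path `(L_{i_a,j_a})_{a<k}` has a bridge: for some `a` and some `b` with
`i_a ≤ b < j_a`, the `b`-th × is not moved in the path. -/
def HasBridge (r : ℕ) {k : ℕ} (iseq jseq : Fin k → Fin r) : Prop :=
  ∃ (a : Fin k) (b : Fin r), iseq a ≤ b ∧ b < jseq a ∧ ∀ c : Fin k, jseq c ≠ b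

/-- A nonempty indecomposable path on `D` has no bridges iff its set of moved labels
`{j_1,…,j_k}` is the whole interval `[i₀, j_k]` (`i₀ = min {i_1,…,i_k}`), iff its
length `k` equals its depth `j_k − i₀` plus one. -/
theorem indecomposable_noBridge_iff
    (r : ℕ) (hr : 1 ≤ r) (D : Finset ℤ) (hD : D.card = r)
    (x : Fin r → ℤ) (hx : StrictMono x) (hxD : ∀ z : ℤ, z ∈ D ↔ ∃ i, x i = z)
    (k : ℕ) (hk : 0 < k)
    (iseq jseq : Fin k → Fin r) (sseq : Fin k → ℤ)
    (hP : IsPath r D x iseq jseq sseq)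
    (hind : iseq ⟨k - 1, by omega⟩ ≤ iseq ⟨0, hk⟩)
    (i0 : Fin r) (hi0mem : ∃ a : Fin k, iseq a = i0) (hi0min : ∀ a : Fin k, i0 ≤ iseq a) :
    (¬ HasBridge r iseq jseq ↔
        Finset.univ.image jseq = Finset.Icc i0 (jseq ⟨k - 1, by omega⟩)) ∧
    (¬ HasBridge r iseq jseq ↔
        k = ((jseq ⟨k - 1, by omega⟩ : ℕ) - (i0 : ℕ)) + 1) := by
  obtain ⟨hmono, hcond2, hcond3, htarget, hinj⟩ := hP
  set last : Fin k := ⟨k - 1, by omega⟩ with hlast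
  have hij : ∀ a, iseq a ≤ jseq a := fun a => (htarget a).1
  have hle_last : ∀ a : Fin k, a ≤ last :=
    fun a => Fin.le_def.mpr (by have := a.2; show (a : ℕ) ≤ k - 1; omega)
  -- iseq last = i0
  have hlast_i0 : iseq last = i0 := by
    obtain ⟨a0, ha0⟩ := hi0mem
    by_cases h : a0 = last
    · rw [← h]; exact ha0
    · have ha0lt : a0 < last := lt_of_le_of_ne (hle_last a0) h
      have hle : iseq last ≤ jseq a0 := by
        by_cases h0 : (a0 : ℕ) = 0
        · have : a0 = ⟨0, hk⟩ := Fin.ext h0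
          calc iseq last ≤ iseq ⟨0, hk⟩ := hind
            _ = iseq a0 := by rw [this]
            _ ≤ jseq a0 := hij a0
        · have h01 : (⟨0, hk⟩ : Fin k) ≤ a0 := Fin.mk_le_of_le_val (by omega)
          calc iseq last ≤ iseq ⟨0, hk⟩ := hind
            _ ≤ jseq ⟨0, hk⟩ := hij _
            _ ≤ jseq a0 := hmono.monotone h01
      have := hcond2 a0 last ha0lt hle
      rw [ha0] at this
      exact le_antisymm this (hi0min last)
  have hi0le : i0 ≤ jseq last := le_trans (hi0min last) (hij last)
  -- image ⊆ Icc
  have hsub : Finset.univ.image jseq ⊆ Finset.Icc i0 (jseq last) := by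
    intro b hb
    obtain ⟨a, -, rfl⟩ := Finset.mem_image.mp hb
    exact Finset.mem_Icc.mpr ⟨le_trans (hi0min a) (hij a), hmono.monotone (hle_last a)⟩
  have h1 : ¬ HasBridge r iseq jseq ↔
      Finset.univ.image jseq = Finset.Icc i0 (jseq last) := by
    constructor
    · intro hnb
      refine le_antisymm hsub ?_
      intro b hb
      obtain ⟨h1b, h2b⟩ := Finset.mem_Icc.mp hb
      rcases eq_or_lt_of_le h2b with heq | hlt
      · exact Finset.mem_image.mpr ⟨last, Finset.mem_univ _, heq.symm⟩
      · by_contra hnotin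
        exact hnb ⟨last, b, by rw [hlast_i0]; exact h1b, hlt,
          fun c hc => hnotin (Finset.mem_image.mpr ⟨c, Finset.mem_univ _, hc⟩)⟩
    · rintro heq ⟨a, b, hab1, hab2, hab3⟩
      have hbmem : b ∈ Finset.Icc i0 (jseq last) :=
        Finset.mem_Icc.mpr ⟨le_trans (hi0min a) hab1,
          le_trans hab2.le (hmono.monotone (hle_last a))⟩
      rw [← heq] at hbmem
      obtain ⟨c, -, hc⟩ := Finset.mem_image.mp hbmem
      exact hab3 c hc
  have hcard_img : (Finset.univ.image jseq).card = k := by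
    rw [Finset.card_image_of_injective _ hmono.injective, Finset.card_univ, Fintype.card_fin]
  have hcard_Icc : (Finset.Icc i0 (jseq last)).card = (jseq last : ℕ) + 1 - (i0 : ℕ) :=
    Fin.card_Icc i0 (jseq last)
  have h2 : Finset.univ.image jseq = Finset.Icc i0 (jseq last) ↔
      k = ((jseq last : ℕ) - (i0 : ℕ)) + 1 := by
    have hi0le' : (i0 : ℕ) ≤ (jseq last : ℕ) := hi0le
    constructor
    · intro heq
      have := congrArg Finset.card heq
      rw [hcard_img, hcard_Icc] at this
      omega
    · intro hkeq
      refine Finset.eq_of_subset_of_card_le hsub ?_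
      rw [hcard_img, hcard_Icc]; omega
  exact ⟨h1, h1.trans h2⟩
end

section
/- There is exactly one path on D of length r, i.e. exactly one path whose set of moved labels is {1, 2, …, r}; it is called the bottom path of D (and corresponds to the bottom composition factor of the Kac module K(λ)). -/
namespace BottomPathAux

variable (D : Finset ℤ)

lemma ell_formula {s t : ℤ} (h : s < t) :
    ell D s t = 2 * (crossCount D s t : ℤ) - (t - s - 1) := by
  have hsum := Finset.card_filter_add_card_filter_not
    (s := Finset.Ioo s t) (p := fun z => z ∈ D)
  have hcard : (Finset.Ioo s t).card = (t - s - 1).toNat := Int.card_Ioo s t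
  unfold ell crossCount
  simp only [hcard] at hsum ⊢
  omega

lemma ell_of_le {s t : ℤ} (h : t ≤ s + 1) : ell D s t = 0 := by
  have : Finset.Ioo s t = ∅ := by
    apply Finset.eq_empty_of_forall_notMem
    intro z hz
    rw [Finset.mem_Ioo] at hz
    omega
  unfold ell crossCount
  simp [this]

lemma crossCount_le_card {s t : ℤ} : crossCount D s t ≤ D.card := by
  apply Finset.card_le_card
  intro z hz
  exact (Finset.mem_filter.mp hz).2

lemma cross_add {s w t : ℤ} (h1 : s < w) (h2 : w < t) :
    crossCount D s t = crossCount D s w + (if w ∈ D then 1 else 0) + crossCount D w t := by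
  have hsplit : Finset.Ioo s t = insert w (Finset.Ioo s w ∪ Finset.Ioo w t) := by
    ext z
    simp only [Finset.mem_Ioo, Finset.mem_insert, Finset.mem_union]
    omega
  have hw : w ∉ Finset.Ioo s w ∪ Finset.Ioo w t := by
    simp [Finset.mem_Ioo]
  have hdisj : Disjoint (Finset.Ioo s w) (Finset.Ioo w t) := by
    rw [Finset.disjoint_left]
    intro z hz1 hz2
    rw [Finset.mem_Ioo] at hz1 hz2
    omega
  unfold crossCount
  rw [hsplit, Finset.filter_insert]
  by_cases hwD : w ∈ D
  · rw [if_pos hwD, if_pos hwD, Finset.card_insert_of_notMem (by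
      intro h; exact hw (Finset.mem_filter.mp h).1),
      Finset.filter_union, Finset.card_union_of_disjoint
        (Finset.disjoint_filter_filter hdisj)]
    omega
  · rw [if_neg hwD, if_neg hwD, Finset.filter_union,
      Finset.card_union_of_disjoint (Finset.disjoint_filter_filter hdisj)]
    omega

lemma ell_add {s w t : ℤ} (h1 : s < w) (h2 : w < t) :
    ell D s t = ell D s w + (if w ∈ D then 1 else -1) + ell D w t := by
  rw [ell_formula D (h1.trans h2), ell_formula D h1, ell_formula D h2, cross_add D h1 h2]
  by_cases hwD : w ∈ D <;> simp [hwD] <;> push_cast <;> ring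

/-- going right from `z`, if `ell z t ≥ 1` then some `w ∈ D` with `ell z w = 0`. -/
lemma ivt_up {z : ℤ} : ∀ n : ℕ, ∀ t : ℤ, (t - z).toNat ≤ n → z < t → 1 ≤ ell D z t →
    ∃ w, z < w ∧ w < t ∧ w ∈ D ∧ ell D z w = 0 := by
  intro n
  induction n with
  | zero => intro t hn hlt hell; omega
  | succ n ih =>
    intro t hn hlt hell
    by_cases ht : t ≤ z + 1
    · rw [ell_of_le D ht] at hell; omega
    push_neg at ht
    have hadd := ell_add D (show z < t - 1 by omega) (show t - 1 < t by omega)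
    have h0 : ell D (t - 1) t = 0 := ell_of_le D (by omega)
    by_cases h1 : 1 ≤ ell D z (t - 1)
    · obtain ⟨w, hw1, hw2, hw3, hw4⟩ := ih (t - 1) (by omega) (by omega) h1
      exact ⟨w, hw1, by omega, hw3, hw4⟩
    · push_neg at h1
      by_cases hD : t - 1 ∈ D
      · rw [if_pos hD] at hadd
        exact ⟨t - 1, by omega, by omega, hD, by omega⟩
      · rw [if_neg hD] at hadd
        omega

/-- going right from `z`, if `ell z t ≤ -1` then some `w ∉ D`, `z < w < t`, `ell w t = 0`. -/
lemma ivt_down {t : ℤ} : ∀ n : ℕ, ∀ z : ℤ, (t - z).toNat ≤ n → z < t → ell D z t ≤ -1 →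
    ∃ w, z < w ∧ w < t ∧ w ∉ D ∧ ell D w t = 0 := by
  intro n
  induction n with
  | zero => intro z hn hlt hell; omega
  | succ n ih =>
    intro z hn hlt hell
    by_cases ht : t ≤ z + 1
    · rw [ell_of_le D ht] at hell; omega
    push_neg at ht
    have hadd := ell_add D (show z < z + 1 by omega) (show z + 1 < t by omega)
    have h0 : ell D z (z + 1) = 0 := ell_of_le D (by omega)
    by_cases h1 : ell D (z + 1) t ≤ -1
    · obtain ⟨w, hw1, hw2, hw3, hw4⟩ := ih (z + 1) (by omega) (by omega) h1
      exact ⟨w, by omega, hw2, hw3, hw4⟩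
    · push_neg at h1
      by_cases hD : z + 1 ∈ D
      · rw [if_pos hD] at hadd
        omega
      · rw [if_neg hD] at hadd
        exact ⟨z + 1, by omega, by omega, hD, by omega⟩

/-- going right from `u` towards `t`: if `ell s u ≥ 1 > 0 ≥ ell s t` then some `w ∉ D`
with `ell s w = 1`, `u ≤ w < t`. -/
lemma ivt_mid {s : ℤ} : ∀ n : ℕ, ∀ u t : ℤ, (t - u).toNat ≤ n → s < u → u ≤ t →
    1 ≤ ell D s u → ell D s t ≤ 0 →
    ∃ w, u ≤ w ∧ w < t ∧ w ∉ D ∧ ell D s w = 1 := by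
  intro n
  induction n with
  | zero =>
    intro u t hn hsu hut h1 h2
    have : u = t := by omega
    subst this; omega
  | succ n ih =>
    intro u t hn hsu hut h1 h2
    have hut' : u < t := by
      rcases lt_or_eq_of_le hut with h | h
      · exact h
      · subst h; omega
    have hadd := ell_add D hsu (show u < u + 1 by omega)
    have h0 : ell D u (u + 1) = 0 := ell_of_le D (by omega)
    by_cases hcase : 1 ≤ ell D s (u + 1)
    · exact (ih (u + 1) t (by omega) (by omega) (by omega) hcase h2).imp
        (fun w hw => ⟨by omega, hw.2.1, hw.2.2.1, hw.2.2.2⟩)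
    · push_neg at hcase
      by_cases hD : u ∈ D
      · rw [if_pos hD] at hadd
        omega
      · rw [if_neg hD] at hadd
        exact ⟨u, le_refl u, hut', hD, by omega⟩


variable {r : ℕ} (x : Fin r → ℤ) (hD : D.card = r)
  (hx : StrictMono x) (hxD : ∀ z : ℤ, z ∈ D ↔ ∃ i, x i = z)

include hxD in
lemma xmem (p : Fin r) : x p ∈ D := (hxD (x p)).2 ⟨p, rfl⟩

/-- candidate targets for the move of the `b`-th cross -/
noncomputable def Tset (b : Fin r) : Finset ℤ :=
  (Finset.Icc (x b - (2 * r + 1)) (x b - 1)).filter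
    (fun z => z ∉ D ∧ ell D z (x b) = 0)

include hD in
lemma mem_Tset {b : Fin r} {z : ℤ} :
    z ∈ Tset D x b ↔ z ∉ D ∧ z < x b ∧ ell D z (x b) = 0 := by
  unfold Tset
  rw [Finset.mem_filter, Finset.mem_Icc]
  constructor
  · rintro ⟨⟨h1, h2⟩, h3, h4⟩
    exact ⟨h3, by omega, h4⟩
  · rintro ⟨h1, h2, h3⟩
    have hf := ell_formula D h2
    have hc : crossCount D z (x b) ≤ r := hD ▸ crossCount_le_card D
    refine ⟨⟨by omega, by omega⟩, h1, h3⟩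

include hD in
lemma Tset_nonempty (b : Fin r) : (Tset D x b).Nonempty := by
  set z0 : ℤ := x b - (2 * r + 2) with hz0
  have hlt : z0 < x b := by omega
  have hell : ell D z0 (x b) ≤ -1 := by
    have hf := ell_formula D hlt
    have hc : crossCount D z0 (x b) ≤ r := hD ▸ crossCount_le_card D
    omega
  obtain ⟨w, hw1, hw2, hw3, hw4⟩ :=
    ivt_down D (x b - z0).toNat z0 (le_refl _) hlt hell
  exact ⟨w, (mem_Tset D x hD).2 ⟨hw3, hw2, hw4⟩⟩

noncomputable def sCan (b : Fin r) : ℤ := (Tset D x b).max' (Tset_nonempty D x hD b)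

include hD in
lemma sCan_spec (b : Fin r) :
    sCan D x hD b ∉ D ∧ sCan D x hD b < x b ∧ ell D (sCan D x hD b) (x b) = 0 :=
  (mem_Tset D x hD).1 ((Tset D x b).max'_mem (Tset_nonempty D x hD b))

include hD in
lemma le_sCan {b : Fin r} {z : ℤ} (h1 : z ∉ D) (h2 : z < x b) (h3 : ell D z (x b) = 0) :
    z ≤ sCan D x hD b :=
  Finset.le_max' _ z ((mem_Tset D x hD).2 ⟨h1, h2, h3⟩)

include hD in
/-- ballot property of the canonical target -/
lemma sCan_ballot {b : Fin r} {z : ℤ} (h1 : sCan D x hD b ≤ z) (h2 : z < x b) :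
    0 ≤ ell D z (x b) := by
  by_contra hneg
  push_neg at hneg
  obtain ⟨w, hw1, hw2, hw3, hw4⟩ :=
    ivt_down D (x b - z).toNat z (le_refl _) h2 (by omega)
  have := le_sCan D x hD hw3 hw2 hw4
  omega

include hD hx hxD in
/-- Claim A: every admissible target for the `b`-th cross is a canonical target of some
`a ≤ b`. -/
lemma claimA : ∀ n : ℕ, ∀ b : Fin r, (b : ℕ) ≤ n → ∀ z : ℤ,
    z ∉ D → z < x b → ell D z (x b) = 0 → ∃ a : Fin r, a ≤ b ∧ z = sCan D x hD a := by
  intro n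
  induction n with
  | zero =>
    intro b hb z hz1 hz2 hz3
    rcases eq_or_lt_of_le (le_sCan D x hD hz1 hz2 hz3) with h | h
    · exact ⟨b, le_refl b, h⟩
    · exfalso
      have hs := sCan_spec D x hD b
      have hadd := ell_add D (w := sCan D x hD b) h hs.2.1
      rw [if_neg hs.1] at hadd
      have h1 : ell D z (sCan D x hD b) = 1 := by omega
      obtain ⟨w, hw1, hw2, hw3, hw4⟩ :=
        ivt_up D (sCan D x hD b - z).toNat (sCan D x hD b) (le_refl _) h (by omega)
      obtain ⟨a0, ha0⟩ := (hxD w).1 hw3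
      have : a0 < b := hx.lt_iff_lt.1 (by rw [ha0]; exact hw2.trans hs.2.1)
      omega
  | succ n ih =>
    intro b hb z hz1 hz2 hz3
    rcases eq_or_lt_of_le (le_sCan D x hD hz1 hz2 hz3) with h | h
    · exact ⟨b, le_refl b, h⟩
    · have hs := sCan_spec D x hD b
      have hadd := ell_add D (w := sCan D x hD b) h hs.2.1
      rw [if_neg hs.1] at hadd
      have h1 : ell D z (sCan D x hD b) = 1 := by omega
      obtain ⟨w, hw1, hw2, hw3, hw4⟩ :=
        ivt_up D (sCan D x hD b - z).toNat (sCan D x hD b) (le_refl _) h (by omega)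
      obtain ⟨a0, ha0⟩ := (hxD w).1 hw3
      have hab : a0 < b := hx.lt_iff_lt.1 (by rw [ha0]; exact hw2.trans hs.2.1)
      obtain ⟨a, ha1, ha2⟩ := ih a0 (by omega) z hz1 (by omega) (by rw [ha0]; exact hw4)
      exact ⟨a, le_of_lt (lt_of_le_of_lt ha1 hab), ha2⟩

include hD hx hxD in
lemma sCan_ne {a b : Fin r} (h : a < b) : sCan D x hD a ≠ sCan D x hD b := by
  intro hab
  obtain ⟨hne, hlt, hell⟩ := sCan_spec D x hD a
  obtain ⟨hne', hlt', hell'⟩ := sCan_spec D x hD b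
  rw [← hab] at hlt' hell'
  have hxab : x a < x b := hx h
  have hadd1 := ell_add D (w := x a) hlt (show x a < x a + 1 by omega)
  have h00 : ell D (x a) (x a + 1) = 0 := ell_of_le D (by omega)
  rw [if_pos (xmem D x hxD a), h00] at hadd1
  obtain ⟨w, hw1, hw2, hw3, hw4⟩ := ivt_mid D (s := sCan D x hD a) (x b - (x a + 1)).toNat (x a + 1) (x b)
    (le_refl _) (by omega) (by omega) (by omega) (by omega)
  have hadd2 := ell_add D (w := w) (show sCan D x hD a < w by omega) hw2
  rw [if_neg hw3] at hadd2
  have hle : w ≤ sCan D x hD b := le_sCan D x hD hw3 hw2 (by omega)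
  rw [← hab] at hle
  omega

include hD hx hxD in
lemma sCan_injective : Function.Injective (sCan D x hD) := by
  intro a b hab
  by_contra hne
  rcases Ne.lt_or_gt hne with h | h
  · exact sCan_ne D x hD hx hxD h hab
  · exact sCan_ne D x hD hx hxD h hab.symm


include hx hxD in
lemma cross_eq_card (s : ℤ) (b : Fin r) :
    crossCount D s (x b) = ((Finset.Iio b).filter (fun p => s < x p)).card := by
  unfold crossCount
  rw [show (Finset.Ioo s (x b)).filter (fun z => z ∈ D)
      = ((Finset.Iio b).filter (fun p => s < x p)).image x from ?_]
  · rw [Finset.card_image_of_injective _ hx.injective]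
  · ext z
    simp only [Finset.mem_filter, Finset.mem_Ioo, Finset.mem_image, Finset.mem_Iio]
    constructor
    · rintro ⟨⟨h1, h2⟩, h3⟩
      obtain ⟨p, hp⟩ := (hxD z).1 h3
      exact ⟨p, ⟨hx.lt_iff_lt.1 (by omega), by omega⟩, hp⟩
    · rintro ⟨p, ⟨hp1, hp2⟩, rfl⟩
      exact ⟨⟨hp2, hx hp1⟩, xmem D x hxD p⟩

include hx hxD in
lemma cross_le (s : ℤ) (b : Fin r) : crossCount D s (x b) ≤ (b : ℕ) := by
  rw [cross_eq_card D x hx hxD s b]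
  calc ((Finset.Iio b).filter (fun p => s < x p)).card
      ≤ (Finset.Iio b).card := Finset.card_le_card (Finset.filter_subset _ _)
    _ = (b : ℕ) := Fin.card_Iio b

include hD hx hxD in
/-- Step 2 of condition (2): non-crossing of canonical targets. -/
lemma sCan_lt_sCan {a b : Fin r} (hab : a < b) (hlt : sCan D x hD b < x a) :
    sCan D x hD b < sCan D x hD a := by
  obtain ⟨hne, hsb, hell⟩ := sCan_spec D x hD b
  have hxab : x a < x b := hx hab
  have hadd := ell_add D (w := x a) hlt hxab
  rw [if_pos (xmem D x hxD a)] at hadd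
  have hball : 0 ≤ ell D (x a) (x b) := sCan_ballot D x hD (le_of_lt hlt) hxab
  obtain ⟨w, hw1, hw2, hw3, hw4⟩ :=
    ivt_down D (x a - sCan D x hD b).toNat (sCan D x hD b) (le_refl _) hlt (by omega)
  have := le_sCan D x hD hw3 hw2 hw4
  omega

include hD hx hxD in
/-- Step 3: condition (2) for the canonical path, in terms of `ℕ`-values. -/
lemma cond2_nat {a b : Fin r} (hab : a < b)
    (h1 : (b : ℕ) - crossCount D (sCan D x hD b) (x b) ≤ (a : ℕ)) :
    (b : ℕ) - crossCount D (sCan D x hD b) (x b)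
      ≤ (a : ℕ) - crossCount D (sCan D x hD a) (x a) := by
  have hcb := cross_le D x hx hxD (sCan D x hD b) b
  have hca := cross_le D x hx hxD (sCan D x hD a) a
  have habn : (a : ℕ) < (b : ℕ) := hab
  -- Step 1 : sCan b < x a
  have hstep1 : sCan D x hD b < x a := by
    by_contra hcon
    push_neg at hcon
    have hsub : (Finset.Iio b).filter (fun p => sCan D x hD b < x p) ⊆ Finset.Ioo a b := by
      intro p hp
      rw [Finset.mem_filter, Finset.mem_Iio] at hp
      rw [Finset.mem_Ioo]
      exact ⟨hx.lt_iff_lt.1 (by omega), hp.1⟩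
    have hcard := Finset.card_le_card hsub
    rw [Fin.card_Ioo] at hcard
    have e2 := cross_eq_card D x hx hxD (sCan D x hD b) b
    omega
  have hstep2 : sCan D x hD b < sCan D x hD a := sCan_lt_sCan D x hD hx hxD hab hstep1
  -- Step 3 : counting
  have hsub : ((Finset.Iio a).filter (fun p => sCan D x hD a < x p)) ∪ Finset.Ico a b
      ⊆ (Finset.Iio b).filter (fun p => sCan D x hD b < x p) := by
    intro p hp
    rw [Finset.mem_union, Finset.mem_filter, Finset.mem_Iio, Finset.mem_Ico] at hp
    rw [Finset.mem_filter, Finset.mem_Iio]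
    rcases hp with ⟨hp1, hp2⟩ | ⟨hp1, hp2⟩
    · exact ⟨hp1.trans hab, by omega⟩
    · exact ⟨hp2, lt_of_lt_of_le hstep1 (hx.le_iff_le.2 hp1)⟩
  have hdisj : Disjoint ((Finset.Iio a).filter (fun p => sCan D x hD a < x p))
      (Finset.Ico a b) := by
    rw [Finset.disjoint_left]
    intro p hp1 hp2
    rw [Finset.mem_filter, Finset.mem_Iio] at hp1
    rw [Finset.mem_Ico] at hp2
    exact absurd hp2.1 (not_le.2 hp1.1)
  have hcard := Finset.card_le_card hsub
  rw [Finset.card_union_of_disjoint hdisj, Fin.card_Ico] at hcard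
  have e1 := cross_eq_card D x hx hxD (sCan D x hD a) a
  have e2 := cross_eq_card D x hx hxD (sCan D x hD b) b
  omega

end BottomPathAux

open BottomPathAux

/-- There is exactly one path on `D` of length `r`, i.e. exactly one path whose set of
moved labels is all of `{1,…,r}`: the bottom path of `D`. -/
theorem bottomPath_existsUnique
    (r : ℕ) (hr : 1 ≤ r) (D : Finset ℤ) (hD : D.card = r)
    (x : Fin r → ℤ) (hx : StrictMono x) (hxD : ∀ z : ℤ, z ∈ D ↔ ∃ i, x i = z) :
    ∃! P : (Fin r → Fin r) × (Fin r → Fin r) × (Fin r → ℤ),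
      IsPath r D x P.1 P.2.1 P.2.2 := by
  classical
  set sC : Fin r → ℤ := sCan D x hD with hsC
  have hcble : ∀ b : Fin r, crossCount D (sC b) (x b) ≤ (b : ℕ) :=
    fun b => cross_le D x hx hxD (sC b) b
  set iC : Fin r → Fin r := fun b =>
    ⟨(b : ℕ) - crossCount D (sC b) (x b),
      Nat.lt_of_le_of_lt (Nat.sub_le _ _) b.isLt⟩ with hiC
  refine ⟨(iC, id, sC), ?_, ?_⟩
  · refine ⟨strictMono_id, ?_, ?_, ?_, sCan_injective D x hD hx hxD⟩
    · -- condition (2)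
      intro a b hab hle
      have h1 : (b : ℕ) - crossCount D (sC b) (x b) ≤ (a : ℕ) := hle
      have := cond2_nat D x hD hx hxD hab h1
      exact this
    · -- condition (3)
      intro b p h1 h2 h3
      exact ⟨p, h2, rfl⟩
    · -- condition (4)
      intro b
      obtain ⟨hne, hlt, hell⟩ := sCan_spec D x hD b
      refine ⟨?_, hne, hlt, hell, ?_⟩
      · show ((b : ℕ) - crossCount D (sC b) (x b)) ≤ (b : ℕ)
        exact Nat.sub_le _ _
      · show crossCount D (sC b) (x b) = (b : ℕ) - ((b : ℕ) - crossCount D (sC b) (x b))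
        have := hcble b
        omega
  · -- uniqueness
    rintro ⟨i', j', s'⟩ ⟨hmono, hc2, hc3, hc4, hinj⟩
    dsimp only at hmono hc2 hc3 hc4 hinj
    have hjid : j' = id := by
      apply (hmono.range_inj strictMono_id).1
      rw [Set.range_id, Set.range_eq_univ]
      exact Finite.surjective_of_injective hmono.injective
    subst hjid
    have hs' : ∀ n : ℕ, ∀ b : Fin r, (b : ℕ) ≤ n → s' b = sC b := by
      intro n
      induction n with
      | zero =>
        intro b hb
        obtain ⟨hle, hnotD, hlt, hell, hcc⟩ := hc4 b
        obtain ⟨a, ha1, ha2⟩ := claimA D x hD hx hxD (b : ℕ) b (le_refl _) (s' b) hnotD hlt hell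
        have : a = b := by
          apply Fin.ext
          have : (a : ℕ) ≤ (b : ℕ) := ha1
          omega
        rw [ha2, this]
      | succ n ih =>
        intro b hb
        obtain ⟨hle, hnotD, hlt, hell, hcc⟩ := hc4 b
        obtain ⟨a, ha1, ha2⟩ := claimA D x hD hx hxD (b : ℕ) b (le_refl _) (s' b) hnotD hlt hell
        rcases eq_or_lt_of_le ha1 with h | h
        · rw [ha2, h]
        · exfalso
          have hne : a ≠ b := ne_of_lt h
          have haval : (a : ℕ) < (b : ℕ) := h
          have hsa : s' a = sC a := ih a (by omega)
          have : s' a = s' b := by rw [hsa, ha2]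
          exact hne (hinj this)
    have hs'' : ∀ b : Fin r, s' b = sC b := fun b => hs' (b : ℕ) b (le_refl _)
    have hi' : ∀ b : Fin r, i' b = iC b := by
      intro b
      obtain ⟨hle, hnotD, hlt, hell, hcc⟩ := hc4 b
      rw [hs'' b] at hcc
      have hleval : (i' b : ℕ) ≤ (b : ℕ) := hle
      apply Fin.ext
      show (i' b : ℕ) = (b : ℕ) - crossCount D (sC b) (x b)
      have := hcble b
      simp only [id_eq] at hcc
      omega
    refine Prod.ext ?_ (Prod.ext rfl ?_)
    · exact funext hi'
    · exact funext hs''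
end

section
/- For each 0 ≤ k ≤ r there is exactly one path on D without bridges whose set of moved labels {j_1, …, j_length} equals {1, 2, …, k}; denote it L_{[1,k]}. Moreover, for every 0 ≤ k < r, the path L_{[1,k]} is a subpath of L_{[1,k+1]}. -/
/-- `P` is a path on `D` without bridges whose set of moved labels is `{1,…,k}`,
i.e. the path `L_{[1,k]}`. -/
def IsL1k (r : ℕ) (D : Finset ℤ) (x : Fin r → ℤ) (k : ℕ)
    (P : (Fin k → Fin r) × (Fin k → Fin r) × (Fin k → ℤ)) : Prop :=
  IsPath r D x P.1 P.2.1 P.2.2 ∧ ¬ HasBridge r P.1 P.2.1 ∧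
  Finset.univ.image P.2.1 = Finset.univ.filter (fun i : Fin r => (i : ℕ) < k)

def LKwt (D : Finset ℤ) (z : ℤ) : ℤ := if z ∈ D then 1 else -1

lemma LKell_eq_sum (D : Finset ℤ) (s t : ℤ) :
    ell D s t = ∑ z ∈ Finset.Ioo s t, LKwt D z := by
  unfold ell crossCount LKwt
  rw [Finset.sum_ite, Finset.sum_const, Finset.sum_const]
  simp [sub_eq_add_neg]

lemma LKell_empty (D : Finset ℤ) {s t : ℤ} (h : t ≤ s + 1) : ell D s t = 0 := by
  have : Finset.Ioo s t = ∅ := by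
    ext z; simp only [Finset.mem_Ioo, Finset.notMem_empty, iff_false, not_and, not_lt]
    omega
  rw [LKell_eq_sum, this, Finset.sum_empty]

lemma LKell_split (D : Finset ℤ) {s m t : ℤ} (h1 : s < m) (h2 : m < t) :
    ell D s t = ell D s m + LKwt D m + ell D m t := by
  have e1 : Finset.Ioo s t = Finset.Ioo s m ∪ insert m (Finset.Ioo m t) := by
    ext z
    simp only [Finset.mem_Ioo, Finset.mem_union, Finset.mem_insert]
    omega
  have d1 : Disjoint (Finset.Ioo s m) (insert m (Finset.Ioo m t)) := by
    simp only [Finset.disjoint_left, Finset.mem_Ioo, Finset.mem_insert]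
    rintro z ⟨hz1, hz2⟩
    push_neg
    constructor
    · omega
    · intro h; omega
  have hnm : m ∉ Finset.Ioo m t := by simp
  rw [LKell_eq_sum, LKell_eq_sum, LKell_eq_sum, e1, Finset.sum_union d1,
    Finset.sum_insert hnm]
  ring

lemma LKstep (D : Finset ℤ) {s t : ℤ} (h : s + 1 < t) :
    ell D s t = LKwt D (s + 1) + ell D (s + 1) t := by
  have := LKell_split D (show s < s + 1 by omega) h
  rw [LKell_empty D (le_refl (s+1))] at this
  omega

lemma LKell_card (D : Finset ℤ) {s t : ℤ} (h : s < t) :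
    ell D s t = 2 * (crossCount D s t : ℤ) - (t - s - 1) := by
  unfold ell crossCount
  have hsplit : ((Finset.Ioo s t).filter (fun z => z ∈ D)).card
      + ((Finset.Ioo s t).filter (fun z => z ∉ D)).card = (Finset.Ioo s t).card :=
    Finset.card_filter_add_card_filter_not (s := Finset.Ioo s t)
      (p := fun z => z ∈ D)
  have hcard : ((Finset.Ioo s t).card : ℤ) = t - s - 1 := by rw [Int.card_Ioo]; omega
  omega

lemma LKcross_le_card (D : Finset ℤ) (s t : ℤ) : crossCount D s t ≤ D.card := by
  apply Finset.card_le_card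
  intro z hz
  exact (Finset.mem_filter.mp hz).2

lemma LKnocross (D : Finset ℤ) {s t : ℤ} (h : s < t)
    (hn : ∀ z, s < z → z < t → z ∉ D) : ell D s t = -(t - s - 1) := by
  have hc : crossCount D s t = 0 := by
    unfold crossCount
    rw [Finset.card_eq_zero, Finset.filter_eq_empty_iff]
    intro z hz
    rw [Finset.mem_Ioo] at hz
    exact hn z hz.1 hz.2
  have := LKell_card D h
  omega

lemma LKivt (F : ℕ → ℤ) (hstep : ∀ n, F (n + 1) ≤ F n + 1) :
    ∀ m : ℕ, F 0 < 0 → 0 ≤ F m → ∃ n ≤ m, F n = 0 := by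
  intro m
  induction m with
  | zero => intro h0 hm; omega
  | succ m ih =>
    intro h0 hm
    by_cases h : 0 ≤ F m
    · obtain ⟨n, hn, h'⟩ := ih h0 h
      exact ⟨n, by omega, h'⟩
    · exact ⟨m + 1, le_refl _, by have := hstep m; omega⟩

section Main

variable {r : ℕ} (D : Finset ℤ) (x : Fin r → ℤ)

lemma LKcrossCount_eq (hx : StrictMono x) (hxD : ∀ z : ℤ, z ∈ D ↔ ∃ i, x i = z)
    (b : Fin r) (s : ℤ) :
    crossCount D s (x b) =
      (Finset.univ.filter (fun p : Fin r => s < x p ∧ p < b)).card := by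
  unfold crossCount
  have himg : (Finset.Ioo s (x b)).filter (fun z => z ∈ D) =
      (Finset.univ.filter (fun p : Fin r => s < x p ∧ p < b)).image x := by
    ext z
    simp only [Finset.mem_filter, Finset.mem_Ioo, Finset.mem_image, Finset.mem_univ,
      true_and]
    constructor
    · rintro ⟨⟨hz1, hz2⟩, hzD⟩
      obtain ⟨p, hp⟩ := (hxD z).1 hzD
      subst hp
      exact ⟨p, ⟨hz1, hx.lt_iff_lt.mp hz2⟩, rfl⟩
    · rintro ⟨p, ⟨hp1, hp2⟩, rfl⟩
      exact ⟨⟨hp1, hx hp2⟩, (hxD (x p)).2 ⟨p, rfl⟩⟩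
  rw [himg, Finset.card_image_of_injective _ hx.injective]

lemma LKcross_le (hx : StrictMono x) (hxD : ∀ z : ℤ, z ∈ D ↔ ∃ i, x i = z)
    (b : Fin r) (s : ℤ) : crossCount D s (x b) ≤ (b : ℕ) := by
  rw [LKcrossCount_eq D x hx hxD]
  calc (Finset.univ.filter (fun p : Fin r => s < x p ∧ p < b)).card
      ≤ (Finset.Iio b).card := by
        apply Finset.card_le_card
        intro p hp
        simp only [Finset.mem_filter] at hp
        simpa [Finset.mem_Iio] using hp.2.2
    _ = (b : ℕ) := Fin.card_Iio b

lemma LKcross_iff (hx : StrictMono x) (hxD : ∀ z : ℤ, z ∈ D ↔ ∃ i, x i = z)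
    (b : Fin r) (s : ℤ) (p : Fin r) (hpb : p < b) :
    s < x p ↔ (b : ℕ) - crossCount D s (x b) ≤ (p : ℕ) := by
  have hcc := LKcrossCount_eq D x hx hxD b s
  set A := Finset.univ.filter (fun p : Fin r => s < x p ∧ p < b) with hA
  have hcb := LKcross_le D x hx hxD b s
  constructor
  · intro hs
    have hsub : Finset.Ico p b ⊆ A := by
      intro q hq
      rw [Finset.mem_Ico] at hq
      rw [hA, Finset.mem_filter]
      exact ⟨Finset.mem_univ _, lt_of_lt_of_le hs (hx.monotone hq.1), hq.2⟩
    have hcard := Finset.card_le_card hsub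
    rw [Fin.card_Ico] at hcard
    omega
  · intro h
    by_contra hs
    push_neg at hs
    have hsub : A ⊆ Finset.Ioo p b := by
      intro q hq
      rw [hA, Finset.mem_filter] at hq
      rw [Finset.mem_Ioo]
      refine ⟨?_, hq.2.2⟩
      by_contra hqp
      push_neg at hqp
      exact absurd (le_trans (hx.monotone hqp) hs) (not_le.mpr hq.2.1)
    have hcard := Finset.card_le_card hsub
    rw [Fin.card_Ioo] at hcard
    omega

noncomputable def LKT (a : Fin r) : Finset ℤ :=
  (Finset.Icc (x a - 1 - 2 * (r : ℤ)) (x a - 1)).filter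
    (fun s => s ∉ D ∧ ell D s (x a) = 0)

lemma LKmem_T (hx : StrictMono x) (hxD : ∀ z : ℤ, z ∈ D ↔ ∃ i, x i = z)
    {a : Fin r} {s : ℤ} (h1 : s ∉ D) (h2 : s < x a) (h3 : ell D s (x a) = 0) :
    s ∈ LKT D x a := by
  simp only [LKT, Finset.mem_filter, Finset.mem_Icc]
  refine ⟨⟨?_, by omega⟩, h1, h3⟩
  have hc := LKell_card D h2
  have hle : crossCount D s (x a) ≤ r := le_trans (LKcross_le D x hx hxD a s)
    (le_of_lt a.isLt)
  omega

lemma LKT_nonempty (hx : StrictMono x) (hxD : ∀ z : ℤ, z ∈ D ↔ ∃ i, x i = z)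
    (a : Fin r) : (LKT D x a).Nonempty := by
  classical
  set F : ℕ → ℤ := fun n => ell D (x a - 1 - n) (x a) with hF
  have hF0 : F 0 = 0 := by
    rw [hF]
    simp only [Nat.cast_zero, sub_zero]
    exact LKell_empty D (by omega)
  have hstep : ∀ n : ℕ, F (n + 1) = LKwt D (x a - 1 - n) + F n := by
    intro n
    rw [hF]
    simp only [Nat.cast_add, Nat.cast_one]
    have h : (x a - 1 - (n + 1 : ℤ)) + 1 < x a := by omega
    have := LKstep D h
    rw [show x a - 1 - (n + 1 : ℤ) + 1 = x a - 1 - n by ring] at this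
    exact this
  have hneg : F (2 * r + 1) < 0 := by
    rw [hF]
    have h2 : (x a - 1 - ((2 * r + 1 : ℕ) : ℤ)) < x a := by push_cast; omega
    have hc := LKell_card D h2
    have hle : crossCount D (x a - 1 - ((2 * r + 1 : ℕ) : ℤ)) (x a) ≤ r :=
      le_trans (LKcross_le D x hx hxD a _) (le_of_lt a.isLt)
    push_cast at hc hle ⊢
    omega
  have hex : ∃ n, F n < 0 := ⟨_, hneg⟩
  set n₀ := Nat.find hex with hn₀
  have hfind : F n₀ < 0 := Nat.find_spec hex
  have hn0 : n₀ ≠ 0 := by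
    intro h
    rw [h, hF0] at hfind
    omega
  have hprev : 0 ≤ F (n₀ - 1) := by
    by_contra h
    push_neg at h
    have h2 : n₀ ≤ n₀ - 1 := hn₀ ▸ Nat.find_le h
    omega
  have hstep' : F n₀ = LKwt D (x a - 1 - (n₀ - 1 : ℕ)) + F (n₀ - 1) := by
    have := hstep (n₀ - 1)
    rwa [Nat.sub_add_cancel (Nat.one_le_iff_ne_zero.mpr hn0)] at this
  set s := x a - 1 - ((n₀ - 1 : ℕ) : ℤ) with hs
  have hsD : s ∉ D := by
    intro hmem
    rw [LKwt, if_pos hmem] at hstep'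
    omega
  have hwt : LKwt D s = -1 := by rw [LKwt, if_neg hsD]
  have hF' : F (n₀ - 1) = 0 := by omega
  refine ⟨s, LKmem_T D x hx hxD hsD (by omega) ?_⟩
  exact hF'

noncomputable def LKsig (hx : StrictMono x) (hxD : ∀ z : ℤ, z ∈ D ↔ ∃ i, x i = z) (a : Fin r) : ℤ :=
  (LKT D x a).max' (LKT_nonempty D x hx hxD a)

variable (hx : StrictMono x) (hxD : ∀ z : ℤ, z ∈ D ↔ ∃ i, x i = z)

lemma LKsig_mem (a : Fin r) : LKsig D x hx hxD a ∈ LKT D x a :=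
  (LKT D x a).max'_mem _

lemma LKsig_spec (a : Fin r) :
    LKsig D x hx hxD a ∉ D ∧ LKsig D x hx hxD a < x a ∧
      ell D (LKsig D x hx hxD a) (x a) = 0 := by
  have := LKsig_mem D x hx hxD a
  simp only [LKT, Finset.mem_filter, Finset.mem_Icc] at this
  exact ⟨this.2.1, by omega, this.2.2⟩

lemma LKsig_le {a : Fin r} {s : ℤ} (h1 : s ∉ D) (h2 : s < x a)
    (h3 : ell D s (x a) = 0) : s ≤ LKsig D x hx hxD a :=
  Finset.le_max' _ _ (LKmem_T D x hx hxD h1 h2 h3)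

lemma LKP1 (a : Fin r) : ∀ s : ℤ, LKsig D x hx hxD a ≤ s → s < x a →
    0 ≤ ell D s (x a) := by
  suffices h : ∀ n : ℕ, ∀ s : ℤ, x a - 1 - s = n → LKsig D x hx hxD a ≤ s →
      s < x a → 0 ≤ ell D s (x a) by
    intro s h1 h2
    exact h (x a - 1 - s).toNat s (by omega) h1 h2
  intro n
  induction n with
  | zero =>
    intro s hs _ h2
    have : s = x a - 1 := by omega
    subst this
    rw [LKell_empty D (by omega)]
  | succ n ih =>
    intro s hs h1 h2
    have hs1 : s + 1 < x a := by omega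
    have ih1 := ih (s + 1) (by omega) (by omega) hs1
    have hsplit := LKstep D hs1
    by_cases hmem : (s + 1) ∈ D
    · rw [hsplit, LKwt, if_pos hmem]; omega
    · by_cases hz : ell D (s + 1) (x a) = 0
      · exfalso
        have := LKsig_le D x hx hxD hmem hs1 hz
        omega
      · rw [hsplit, LKwt, if_neg hmem]; omega

lemma LKnoncross {a b : Fin r} (hab : a < b) (h : LKsig D x hx hxD b < x a) :
    LKsig D x hx hxD b < LKsig D x hx hxD a := by
  by_contra h'
  push_neg at h'
  have h1 : 0 ≤ ell D (LKsig D x hx hxD b) (x a) := LKP1 D x hx hxD a _ h' h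
  have h2 : 0 ≤ ell D (x a) (x b) := LKP1 D x hx hxD b _ (le_of_lt h) (hx hab)
  have h3 := LKell_split D h (hx hab)
  have h4 := (LKsig_spec D x hx hxD b).2.2
  have h5 : LKwt D (x a) = 1 := by rw [LKwt, if_pos ((hxD (x a)).2 ⟨a, rfl⟩)]
  omega

lemma LKsig_inj : Function.Injective (LKsig D x hx hxD) := by
  have key : ∀ a b : Fin r, a < b → LKsig D x hx hxD a ≠ LKsig D x hx hxD b := by
    intro a b hab heq
    have h1 : LKsig D x hx hxD b < x a := by
      rw [← heq]; exact (LKsig_spec D x hx hxD a).2.1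
    have := LKnoncross D x hx hxD hab h1
    omega
  intro a b h
  rcases lt_trichotomy a b with h' | h' | h'
  · exact absurd h (key a b h')
  · exact h'
  · exact absurd h.symm (key b a h')

lemma LKclaimV : ∀ a : Fin r, ∀ t : ℤ, t ∉ D → t < x a → ell D t (x a) = 0 →
    ∃ p : Fin r, p ≤ a ∧ LKsig D x hx hxD p = t := by
  suffices H : ∀ n : ℕ, ∀ a : Fin r, (a : ℕ) = n → ∀ t : ℤ, t ∉ D → t < x a →
      ell D t (x a) = 0 → ∃ p : Fin r, p ≤ a ∧ LKsig D x hx hxD p = t by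
    intro a
    exact H a a rfl
  intro n
  induction n using Nat.strong_induction_on with
  | _ n ih =>
  intro a han t ht hta hell
  by_cases hts : t = LKsig D x hx hxD a
  · exact ⟨a, le_refl a, hts.symm⟩
  have htlt : t < LKsig D x hx hxD a :=
    lt_of_le_of_ne (LKsig_le D x hx hxD ht hta hell) hts
  by_cases hA : ∃ p : Fin r, p < a ∧ t < x p ∧ ell D t (x p) = 0
  · obtain ⟨p, hpa, htp, hellp⟩ := hA
    obtain ⟨q, hqp, hq⟩ := ih p (by rw [← han]; exact hpa) p rfl t ht htp hellp
    exact ⟨q, le_trans hqp (le_of_lt hpa), hq⟩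
  · exfalso
    push_neg at hA
    obtain ⟨hsD, hsxa, hs0⟩ := LKsig_spec D x hx hxD a
    set s := LKsig D x hx hxD a with hsdef
    -- ell t s = 1
    have hsplit := LKell_split D htlt hsxa
    have hwts : LKwt D s = -1 := by rw [LKwt, if_neg hsD]
    have h1 : ell D t s = 1 := by omega
    -- there is a cross in (t, s)
    have hcc : 1 ≤ crossCount D t s := by
      by_contra hc
      push_neg at hc
      have hc0 : crossCount D t s = 0 := by omega
      have := LKell_card D htlt
      omega
    have hne : ((Finset.Ioo t s).filter (fun z => z ∈ D)).Nonempty := by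
      rw [← Finset.card_pos]
      exact lt_of_lt_of_le Nat.zero_lt_one hcc
    set z := ((Finset.Ioo t s).filter (fun z => z ∈ D)).max' hne with hz
    have hzmem := ((Finset.Ioo t s).filter (fun z => z ∈ D)).max'_mem hne
    rw [← hz, Finset.mem_filter, Finset.mem_Ioo] at hzmem
    obtain ⟨⟨htz, hzs⟩, hzD⟩ := hzmem
    obtain ⟨p, hp⟩ := (hxD z).1 hzD
    have hpa : p < a := hx.lt_iff_lt.mp (by omega)
    -- no crosses in (x p, s)
    have hub : ∀ w, x p < w → w < s → w ∉ D := by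
      intro w h1' h2' hw
      have hwmem : w ∈ (Finset.Ioo t s).filter (fun z => z ∈ D) := by
        rw [Finset.mem_filter, Finset.mem_Ioo]
        exact ⟨⟨by omega, h2'⟩, hw⟩
      have := Finset.le_max' _ w hwmem
      omega
    have h2 : ell D (x p) s = -(s - x p - 1) := LKnocross D (by omega) hub
    have hsplit2 := LKell_split D (show t < x p by omega) (show x p < s by omega)
    have hwtp : LKwt D (x p) = 1 := by rw [LKwt, if_pos ((hxD (x p)).2 ⟨p, rfl⟩)]
    have h3 : ell D t (x p) = s - x p - 1 := by omega
    have h4 : 1 ≤ ell D t (x p) := by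
      have := hA p hpa (by omega)
      omega
    -- minimal relevant cross index
    have hQne : (Finset.univ.filter (fun q : Fin r => t < x q ∧ q < a)).Nonempty :=
      ⟨p, by simp only [Finset.mem_filter, Finset.mem_univ, true_and]; exact ⟨by omega, hpa⟩⟩
    set q₀ := (Finset.univ.filter (fun q : Fin r => t < x q ∧ q < a)).min' hQne with hq₀def
    have hq₀mem := (Finset.univ.filter (fun q : Fin r => t < x q ∧ q < a)).min'_mem hQne
    rw [← hq₀def, Finset.mem_filter] at hq₀mem
    obtain ⟨-, htq₀, hq₀a⟩ := hq₀mem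
    have hq₀p : q₀ ≤ p := Finset.min'_le _ p
      (by simp only [Finset.mem_filter, Finset.mem_univ, true_and]; exact ⟨by omega, hpa⟩)
    -- no crosses in (t, x q₀)
    have hnc0 : ∀ w, t < w → w < x q₀ → w ∉ D := by
      intro w hw1 hw2 hwD
      obtain ⟨q', hq'⟩ := (hxD w).1 hwD
      have hq'q₀ : q' < q₀ := hx.lt_iff_lt.mp (by omega)
      have : q₀ ≤ q' := Finset.min'_le _ q'
        (by simp only [Finset.mem_filter, Finset.mem_univ, true_and]
            exact ⟨by omega, lt_trans hq'q₀ hq₀a⟩)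
      exact absurd hq'q₀ (not_lt.mpr this)
    have h5 : ell D t (x q₀) = -(x q₀ - t - 1) := LKnocross D htq₀ hnc0
    have h6 : ell D t (x q₀) ≠ 0 := hA q₀ hq₀a htq₀
    have h5' : ell D t (x q₀) < 0 := by omega
    -- walk along crosses from q₀ to p
    set G : ℕ → Fin r := fun n => ⟨min (q₀.val + n) p.val, by
      have := p.isLt; omega⟩ with hG
    set F : ℕ → ℤ := fun n => ell D t (x (G n)) with hFdef
    have hq₀le : (q₀ : ℕ) ≤ (p : ℕ) := hq₀p
    have hG0 : G 0 = q₀ := by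
      rw [hG]; apply Fin.ext; simp only []; omega
    have hGm : G (p.val - q₀.val) = p := by
      rw [hG]; apply Fin.ext; simp only []; omega
    have htG : ∀ n, t < x (G n) := by
      intro n
      have : q₀ ≤ G n := by
        rw [Fin.le_def, hG]; simp only []; omega
      exact lt_of_lt_of_le htq₀ (hx.monotone this)
    have hstepF : ∀ n, F (n + 1) ≤ F n + 1 := by
      intro n
      by_cases hnp : q₀.val + n < p.val
      · have hGn1 : (G (n+1) : ℕ) = (G n : ℕ) + 1 := by
          rw [hG]; simp only []; omega
        have hlt : x (G n) < x (G (n + 1)) := hx (by rw [Fin.lt_def]; omega)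
        have hsplitn := LKell_split D (htG n) hlt
        have hwtn : LKwt D (x (G n)) = 1 := by
          rw [LKwt, if_pos ((hxD (x (G n))).2 ⟨G n, rfl⟩)]
        have hmid : ell D (x (G n)) (x (G (n + 1))) ≤ 0 := by
          have hncm : ∀ w, x (G n) < w → w < x (G (n+1)) → w ∉ D := by
            intro w hw1 hw2 hwD
            obtain ⟨q', hq'⟩ := (hxD w).1 hwD
            have l1 : G n < q' := hx.lt_iff_lt.mp (by omega)
            have l2 : q' < G (n+1) := hx.lt_iff_lt.mp (by omega)
            rw [Fin.lt_def] at l1 l2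
            omega
          have := LKnocross D hlt hncm
          omega
        rw [hFdef]
        simp only []
        omega
      · have : G (n + 1) = G n := by
          rw [hG]; apply Fin.ext; simp only []; omega
        rw [hFdef]; simp only [this]; omega
    have hF0 : F 0 < 0 := by
      rw [hFdef]; simp only [hG0]; omega
    have hFm : 0 ≤ F (p.val - q₀.val) := by
      rw [hFdef]; simp only [hGm]; omega
    obtain ⟨m, hm, hFm0⟩ := LKivt F hstepF (p.val - q₀.val) hF0 hFm
    have hGma : G m < a := by
      rw [Fin.lt_def, hG]
      simp only []
      have : (p : ℕ) < (a : ℕ) := hpa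
      omega
    exact hA (G m) hGma (htG m) hFm0

noncomputable def LKc (a : Fin r) : ℕ := crossCount D (LKsig D x hx hxD a) (x a)

lemma LKc_def (a : Fin r) :
    LKc D x hx hxD a = crossCount D (LKsig D x hx hxD a) (x a) := rfl

lemma LKc_le (a : Fin r) : LKc D x hx hxD a ≤ (a : ℕ) :=
  LKcross_le D x hx hxD a _

noncomputable def LKi (a : Fin r) : Fin r :=
  ⟨(a : ℕ) - LKc D x hx hxD a, lt_of_le_of_lt (Nat.sub_le _ _) a.isLt⟩

lemma LKi_val (a : Fin r) : (LKi D x hx hxD a : ℕ) = (a : ℕ) - LKc D x hx hxD a := rfl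

lemma LKi_mono {a b : Fin r} (hab : a < b) (h : LKi D x hx hxD b ≤ a) :
    LKi D x hx hxD b ≤ LKi D x hx hxD a := by
  have hca := LKc_le D x hx hxD a
  have hcb := LKc_le D x hx hxD b
  rw [Fin.le_def, LKi_val] at h
  have hhx : LKsig D x hx hxD b < x a := by
    rw [LKcross_iff D x hx hxD b _ a hab, ← LKc_def]
    exact h
  have hss : LKsig D x hx hxD b < LKsig D x hx hxD a :=
    LKnoncross D x hx hxD hab hhx
  have hAB : (Finset.univ.filter (fun p : Fin r => LKsig D x hx hxD a < x p ∧ p < a))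
      ∪ Finset.Ico a b ⊆
      Finset.univ.filter (fun p : Fin r => LKsig D x hx hxD b < x p ∧ p < b) := by
    intro p hp
    rw [Finset.mem_union, Finset.mem_filter, Finset.mem_Ico] at hp
    rw [Finset.mem_filter]
    refine ⟨Finset.mem_univ _, ?_⟩
    rcases hp with ⟨-, h1, h2⟩ | ⟨h1, h2⟩
    · exact ⟨lt_trans hss h1, lt_trans h2 hab⟩
    · exact ⟨lt_of_lt_of_le hhx (hx.monotone h1), h2⟩
  have hdisj : Disjoint
      (Finset.univ.filter (fun p : Fin r => LKsig D x hx hxD a < x p ∧ p < a))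
      (Finset.Ico a b) := by
    rw [Finset.disjoint_left]
    intro p hp hp'
    rw [Finset.mem_filter] at hp
    rw [Finset.mem_Ico] at hp'
    exact absurd hp.2.2 (not_lt.mpr hp'.1)
  have hcard := Finset.card_le_card hAB
  rw [Finset.card_union_of_disjoint hdisj, Fin.card_Ico] at hcard
  have hA : (Finset.univ.filter
      (fun p : Fin r => LKsig D x hx hxD a < x p ∧ p < a)).card = LKc D x hx hxD a :=
    (LKcrossCount_eq D x hx hxD a _).symm
  have hB : (Finset.univ.filter
      (fun p : Fin r => LKsig D x hx hxD b < x p ∧ p < b)).card = LKc D x hx hxD b :=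
    (LKcrossCount_eq D x hx hxD b _).symm
  rw [hA, hB] at hcard
  rw [Fin.le_def, LKi_val, LKi_val]
  have hab' : (a : ℕ) < (b : ℕ) := hab
  omega

noncomputable def LKcanon (k : ℕ) (hk : k ≤ r) :
    (Fin k → Fin r) × (Fin k → Fin r) × (Fin k → ℤ) :=
  (fun a => LKi D x hx hxD (Fin.castLE hk a), Fin.castLE hk,
   fun a => LKsig D x hx hxD (Fin.castLE hk a))

lemma LKfilter_eq_image (k : ℕ) (hk : k ≤ r) :
    Finset.univ.filter (fun i : Fin r => (i : ℕ) < k) =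
      Finset.univ.image (Fin.castLE hk) := by
  ext i
  simp only [Finset.mem_filter, Finset.mem_univ, true_and, Finset.mem_image]
  constructor
  · intro h
    exact ⟨⟨(i : ℕ), h⟩, Fin.ext rfl⟩
  · rintro ⟨a, rfl⟩
    exact a.isLt

lemma LKcanon_isL1k (k : ℕ) (hk : k ≤ r) :
    IsL1k r D x k (LKcanon D x hx hxD k hk) := by
  unfold IsL1k LKcanon IsPath
  dsimp only
  refine ⟨⟨?_, ?_, ?_, ?_, ?_⟩, ?_, ?_⟩
  · exact Fin.strictMono_castLE hk
  · intro a b hab h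
    exact LKi_mono D x hx hxD (show Fin.castLE hk a < Fin.castLE hk b from hab) h
  · intro b p h1 h2 h3
    have h2' : (p : ℕ) < (b : ℕ) := h2
    exact ⟨⟨(p : ℕ), lt_trans h2' b.isLt⟩, h2', Fin.ext rfl⟩
  · intro a
    unfold IsLeftMoveTarget
    obtain ⟨h1, h2, h3⟩ := LKsig_spec D x hx hxD (Fin.castLE hk a)
    refine ⟨?_, h1, h2, h3, ?_⟩
    · rw [Fin.le_def, LKi_val]
      exact Nat.sub_le _ _
    · rw [← LKc_def, LKi_val]
      have := LKc_le D x hx hxD (Fin.castLE hk a)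
      omega
  · intro a b h
    exact Fin.castLE_injective hk (LKsig_inj D x hx hxD h)
  · rintro ⟨a, b, h1, h2, h3⟩
    have hb : (b : ℕ) < k :=
      lt_trans (show (b : ℕ) < (a : ℕ) from h2) a.isLt
    exact h3 ⟨(b : ℕ), hb⟩ (Fin.ext rfl)
  · exact (LKfilter_eq_image k hk).symm

lemma LKcanon_unique (k : ℕ) (hk : k ≤ r)
    (P : (Fin k → Fin r) × (Fin k → Fin r) × (Fin k → ℤ))
    (hP : IsL1k r D x k P) : P = LKcanon D x hx hxD k hk := by
  obtain ⟨pi, pj, ps⟩ := P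
  unfold IsL1k IsPath at hP
  obtain ⟨⟨hmono, hcond2, hcond3, htgt, hinj⟩, hbr, himg⟩ := hP
  simp only at hmono hcond2 hcond3 htgt hinj hbr himg
  have hscard : (Finset.univ.filter (fun i : Fin r => (i : ℕ) < k)).card = k := by
    rw [LKfilter_eq_image k hk, Finset.card_image_of_injective _ (Fin.castLE_injective hk),
      Finset.card_univ, Fintype.card_fin]
  have hjcast : pj = Fin.castLE hk := by
    have h1 : pj = ⇑((Finset.univ.filter (fun i : Fin r => (i : ℕ) < k)).orderEmbOfFin hscard) :=
      Finset.orderEmbOfFin_unique hscard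
        (fun a => by rw [← himg]; exact Finset.mem_image_of_mem _ (Finset.mem_univ a)) hmono
    have h2 : Fin.castLE hk =
        ⇑((Finset.univ.filter (fun i : Fin r => (i : ℕ) < k)).orderEmbOfFin hscard) :=
      Finset.orderEmbOfFin_unique hscard
        (fun a => by
          simp only [Finset.mem_filter, Finset.mem_univ, true_and]
          exact a.isLt)
        (Fin.strictMono_castLE hk)
    rw [h1, h2]
  subst hjcast
  have hkey : ∀ n : ℕ, ∀ a : Fin k, (a : ℕ) = n →
      ps a = LKsig D x hx hxD (Fin.castLE hk a) ∧
      pi a = LKi D x hx hxD (Fin.castLE hk a) := by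
    intro n
    induction n using Nat.strong_induction_on with
    | _ n ih =>
    intro a han
    have htgt' := htgt a
    unfold IsLeftMoveTarget at htgt'
    obtain ⟨hij, hsD, hsx, hse, hscc⟩ := htgt'
    obtain ⟨p, hpa, hp⟩ := LKclaimV D x hx hxD (Fin.castLE hk a) (ps a) hsD hsx hse
    have hps : ps a = LKsig D x hx hxD (Fin.castLE hk a) := by
      rcases lt_or_eq_of_le hpa with hlt | heq
      · exfalso
        have hpk : (p : ℕ) < k :=
          lt_of_lt_of_le (show (p : ℕ) < (Fin.castLE hk a : ℕ) from hlt) a.isLt.le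
        set a₂ : Fin k := ⟨(p : ℕ), hpk⟩ with ha₂
        have hcast : Fin.castLE hk a₂ = p := Fin.ext rfl
        have hn2 : (a₂ : ℕ) < n := by
          rw [← han]
          exact hlt
        have hih := (ih (a₂ : ℕ) hn2 a₂ rfl).1
        have heq2 : ps a₂ = ps a := by rw [hih, hcast, hp]
        have := hinj heq2
        rw [this] at hn2
        rw [han] at hn2
        exact lt_irrefl _ hn2
      · rw [heq] at hp
        exact hp.symm
    refine ⟨hps, ?_⟩
    rw [hps] at hscc
    rw [← LKc_def] at hscc
    have h2 : (pi a : ℕ) ≤ (Fin.castLE hk a : ℕ) := hij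
    apply Fin.ext
    rw [LKi_val]
    have hcle := LKc_le D x hx hxD (Fin.castLE hk a)
    omega
  have hps : ps = fun a => LKsig D x hx hxD (Fin.castLE hk a) :=
    funext fun a => (hkey (a : ℕ) a rfl).1
  have hpi : pi = fun a => LKi D x hx hxD (Fin.castLE hk a) :=
    funext fun a => (hkey (a : ℕ) a rfl).2
  rw [LKcanon, hps, hpi]

end Main

/-- For each `0 ≤ k ≤ r` there is exactly one path `L_{[1,k]}` on `D` without bridges
whose set of moved labels is `{1,…,k}`; moreover for `k < r` the path `L_{[1,k]}` is a
subpath of `L_{[1,k+1]}` (via the initial-segment embedding, with the same moves and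
targets). -/
theorem L1k_existsUnique_and_subpath
    (r : ℕ) (hr : 1 ≤ r) (D : Finset ℤ) (hD : D.card = r)
    (x : Fin r → ℤ) (hx : StrictMono x) (hxD : ∀ z : ℤ, z ∈ D ↔ ∃ i, x i = z) :
    (∀ k : ℕ, k ≤ r →
      ∃! P : (Fin k → Fin r) × (Fin k → Fin r) × (Fin k → ℤ), IsL1k r D x k P) ∧
    (∀ k : ℕ, k < r →
      ∀ (P : (Fin k → Fin r) × (Fin k → Fin r) × (Fin k → ℤ))
        (Q : (Fin (k + 1) → Fin r) × (Fin (k + 1) → Fin r) × (Fin (k + 1) → ℤ)),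
        IsL1k r D x k P → IsL1k r D x (k + 1) Q →
        ∀ a : Fin k, Q.1 a.castSucc = P.1 a ∧ Q.2.1 a.castSucc = P.2.1 a ∧
          Q.2.2 a.castSucc = P.2.2 a) := by
  constructor
  · intro k hk
    exact ⟨LKcanon D x hx hxD k hk, LKcanon_isL1k D x hx hxD k hk,
      fun P hP => LKcanon_unique D x hx hxD k hk P hP⟩
  · intro k hkr P Q hP hQ a
    have hk : k ≤ r := le_of_lt hkr
    have hk1 : k + 1 ≤ r := hkr
    rw [LKcanon_unique D x hx hxD k hk P hP,
      LKcanon_unique D x hx hxD (k + 1) hk1 Q hQ]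
    have hc : Fin.castLE hk1 a.castSucc = Fin.castLE hk a := Fin.ext rfl
    refine ⟨?_, ?_, ?_⟩
    · show LKi D x hx hxD (Fin.castLE hk1 a.castSucc) = LKi D x hx hxD (Fin.castLE hk a)
      rw [hc]
    · show Fin.castLE hk1 a.castSucc = Fin.castLE hk a
      exact hc
    · show LKsig D x hx hxD (Fin.castLE hk1 a.castSucc) = LKsig D x hx hxD (Fin.castLE hk a)
      rw [hc]
end

section
/- Let (L_{i_1,j_1}, …, L_{i_k,j_k}) be a path on D with targets s_1, …, s_k, and let D′ = (D \ {x_{j_1},…,x_{j_k}}) ∪ {s_1,…,s_k} be its resulting diagram. Then |D′| = r, and writing x′_1 < x′_2 < ⋯ < x′_r for the elements of D′, one has x′_a ≤ x_a for every 1 ≤ a ≤ r. (In terms of weights: the weight μ corresponding to a path of λ satisfies μ ≼ λ in the partial order where μ ≼ λ iff every coordinate of μ is at most the corresponding coordinate of λ.) -/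
/-- The resulting diagram of a path: delete the ×'s at the moved vertices `x_{j_a}` and
place ×'s at the targets `s_a`. -/
def resultDiagram (r : ℕ) (D : Finset ℤ) (x : Fin r → ℤ) {k : ℕ}
    (jseq : Fin k → Fin r) (sseq : Fin k → ℤ) : Finset ℤ :=
  (D \ Finset.univ.image (fun a => x (jseq a))) ∪ Finset.univ.image sseq

/-- The resulting diagram `D′` of a path on `D` has exactly `r` elements, and its
elements `x′_1 < ⋯ < x′_r` satisfy `x′_a ≤ x_a` for every `a`; i.e. the weight
corresponding to a path of `λ` satisfies `μ ≼ λ` coordinatewise. -/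
theorem resultDiagram_card_and_le
    (r : ℕ) (hr : 1 ≤ r) (D : Finset ℤ) (hD : D.card = r)
    (x : Fin r → ℤ) (hx : StrictMono x) (hxD : ∀ z : ℤ, z ∈ D ↔ ∃ i, x i = z)
    (k : ℕ) (iseq jseq : Fin k → Fin r) (sseq : Fin k → ℤ)
    (hP : IsPath r D x iseq jseq sseq) :
    (resultDiagram r D x jseq sseq).card = r ∧
    ∀ x' : Fin r → ℤ, StrictMono x' →
      (∀ z : ℤ, z ∈ resultDiagram r D x jseq sseq ↔ ∃ a, x' a = z) →
      ∀ a : Fin r, x' a ≤ x a := by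
  obtain ⟨hmono, -, -, htar, hinj⟩ := hP
  have hxinj : Function.Injective x := hx.injective
  have hcomp : Function.Injective (fun b : Fin k => x (jseq b)) := fun a b h =>
    hmono.injective (hxinj h)
  have hMD : Finset.univ.image (fun a => x (jseq a)) ⊆ D := by
    intro z hz
    simp only [Finset.mem_image, Finset.mem_univ, true_and] at hz
    obtain ⟨b, rfl⟩ := hz
    exact (hxD _).2 ⟨jseq b, rfl⟩
  have hMcard : (Finset.univ.image (fun a => x (jseq a))).card = k := by
    rw [Finset.card_image_of_injective _ hcomp, Finset.card_univ,
      Fintype.card_fin]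
  have hScard : (Finset.univ.image sseq).card = k := by
    rw [Finset.card_image_of_injective _ hinj, Finset.card_univ, Fintype.card_fin]
  have hSD : ∀ z ∈ Finset.univ.image sseq, z ∉ D := by
    intro z hz
    simp only [Finset.mem_image, Finset.mem_univ, true_and] at hz
    obtain ⟨b, rfl⟩ := hz
    exact (htar b).2.1
  have hdisj : Disjoint (D \ Finset.univ.image (fun a => x (jseq a))) (Finset.univ.image sseq) := by
    rw [Finset.disjoint_right]
    intro z hz hz'
    exact hSD z hz (Finset.mem_sdiff.mp hz').1
  have hkr : k ≤ r := by
    calc k = _ := hMcard.symm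
      _ ≤ D.card := Finset.card_le_card hMD
      _ = r := hD
  have hcard : (resultDiagram r D x jseq sseq).card = r := by
    rw [resultDiagram, Finset.card_union_of_disjoint hdisj, Finset.card_sdiff_of_subset hMD, hD, hMcard,
      hScard]
    omega
  refine ⟨hcard, ?_⟩
  intro x' hx' hx'D a
  by_contra hlt
  push_neg at hlt
  have hDcount : (D.filter (fun z => z ≤ x a)).card = (a : ℕ) + 1 := by
    have h : D.filter (fun z => z ≤ x a) = Finset.image x (Finset.Iic a) := by
      ext z
      simp only [Finset.mem_filter, Finset.mem_image, Finset.mem_Iic]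
      constructor
      · rintro ⟨hzD, hz⟩
        obtain ⟨i, rfl⟩ := (hxD z).mp hzD
        exact ⟨i, hx.le_iff_le.mp hz, rfl⟩
      · rintro ⟨i, hi, rfl⟩
        exact ⟨(hxD _).mpr ⟨i, rfl⟩, hx.monotone hi⟩
    rw [h, Finset.card_image_of_injective _ hxinj, Fin.card_Iic]
  have hMfilsub : (Finset.univ.image (fun b => x (jseq b))).filter (fun z => z ≤ x a)
      ⊆ D.filter (fun z => z ≤ x a) := Finset.filter_subset_filter _ hMD
  have hMfil : ((Finset.univ.image (fun b => x (jseq b))).filter (fun z => z ≤ x a)).card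
      ≤ ((Finset.univ.image sseq).filter (fun z => z ≤ x a)).card := by
    have h1 : (Finset.univ.image (fun b => x (jseq b))).filter (fun z => z ≤ x a)
        = Finset.image (fun b => x (jseq b)) (Finset.univ.filter (fun b => x (jseq b) ≤ x a)) := by
      ext z
      simp only [Finset.mem_filter, Finset.mem_image, Finset.mem_univ, true_and]
      constructor
      · rintro ⟨⟨b, rfl⟩, hz⟩; exact ⟨b, hz, rfl⟩
      · rintro ⟨b, hb, rfl⟩; exact ⟨⟨b, rfl⟩, hb⟩
    have h2 : Finset.image sseq (Finset.univ.filter (fun b => x (jseq b) ≤ x a))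
        ⊆ (Finset.univ.image sseq).filter (fun z => z ≤ x a) := by
      intro z hz
      simp only [Finset.mem_image, Finset.mem_filter, Finset.mem_univ, true_and] at hz ⊢
      obtain ⟨b, hb, rfl⟩ := hz
      exact ⟨⟨b, rfl⟩, le_trans (le_of_lt (htar b).2.2.1) hb⟩
    calc _ = (Finset.univ.filter (fun b => x (jseq b) ≤ x a)).card := by
            rw [h1, Finset.card_image_of_injective _ hcomp]
      _ = (Finset.image sseq (Finset.univ.filter (fun b => x (jseq b) ≤ x a))).card := by
            rw [Finset.card_image_of_injective _ hinj]
      _ ≤ _ := Finset.card_le_card h2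
  have hsplit : (resultDiagram r D x jseq sseq).filter (fun z => z ≤ x a)
      = ((D.filter (fun z => z ≤ x a))
          \ ((Finset.univ.image (fun b => x (jseq b))).filter (fun z => z ≤ x a)))
        ∪ ((Finset.univ.image sseq).filter (fun z => z ≤ x a)) := by
    ext z
    simp only [resultDiagram, Finset.mem_filter, Finset.mem_union, Finset.mem_sdiff]
    tauto
  have hdisj2 : Disjoint
      ((D.filter (fun z => z ≤ x a))
        \ ((Finset.univ.image (fun b => x (jseq b))).filter (fun z => z ≤ x a)))
      ((Finset.univ.image sseq).filter (fun z => z ≤ x a)) := by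
    rw [Finset.disjoint_right]
    intro z hz hz'
    exact hSD z (Finset.mem_filter.mp hz).1
      (Finset.mem_filter.mp (Finset.mem_sdiff.mp hz').1).1
  have hD'count : (a : ℕ) + 1 ≤ ((resultDiagram r D x jseq sseq).filter (fun z => z ≤ x a)).card := by
    rw [hsplit, Finset.card_union_of_disjoint hdisj2, Finset.card_sdiff_of_subset hMfilsub]
    have := Finset.card_le_card hMfilsub
    omega
  have hupper : ((resultDiagram r D x jseq sseq).filter (fun z => z ≤ x a)).card ≤ (a : ℕ) := by
    have hsub : (resultDiagram r D x jseq sseq).filter (fun z => z ≤ x a)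
        ⊆ Finset.image x' (Finset.Iio a) := by
      intro z hz
      rw [Finset.mem_filter] at hz
      obtain ⟨b, rfl⟩ := (hx'D z).mp hz.1
      rw [Finset.mem_image]
      refine ⟨b, Finset.mem_Iio.mpr ?_, rfl⟩
      by_contra hba
      push_neg at hba
      exact absurd ((hx'.monotone hba).trans hz.2) (not_le.mpr hlt)
    calc _ ≤ (Finset.image x' (Finset.Iio a)).card := Finset.card_le_card hsub
      _ ≤ (Finset.Iio a).card := Finset.card_image_le
      _ = (a : ℕ) := Fin.card_Iio a
  omega
end
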